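/- There exists an uncountable set A ⊆ [0,1] which is non-sliding, i.e., for every real number t ≠ 0 the intersection A ∩ (A + t) contains at most one point. -/

import Mathlib

open Set

-- Sidon property for a linearly independent family
lemma sidon_of_li {ι : Type*} {g : ι → ℝ} (hli : LinearIndependent ℚ g)
    {i j k l : ι} (hij : g i ≠ g j) (h : g i - g j = g k - g l) :
    g i = g k ∧ g j = g l := by
  classical
  have hinj : Function.Injective g := hli.injective
  have hij' : i ≠ j := fun e => hij (by rw [e])
  have hik : i = k := by
    by_contra hik
    set c : ι →₀ ℚ := Finsupp.single i 1 - Finsupp.single j 1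
      - Finsupp.single k 1 + Finsupp.single l 1 with hc
    have h0 : Finsupp.linearCombination ℚ g c = 0 := by
      simp only [hc, map_add, map_sub, Finsupp.linearCombination_single, one_smul]
      linarith
    have hc0 : c = 0 := linearIndependent_iff.mp hli c h0
    have := congrArg (fun f => f i) hc0
    have hji : (j = i) = False := eq_false (fun e => hij' e.symm)
    have hki : (k = i) = False := eq_false (fun e => hik e.symm)
    by_cases hl : l = i <;>
      simp [hc, Finsupp.single_apply, hji, hki, hl] at this
  refine ⟨by rw [hik], ?_⟩
  rw [hik] at h
  linarith

theorem exists_uncountable_nonSliding :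
    ∃ A : Set ℝ, A ⊆ Set.Icc 0 1 ∧ ¬ A.Countable ∧
      ∀ t : ℝ, t ≠ 0 → (A ∩ ((fun a => a + t) '' A)).Subsingleton := by
  classical
  set ι := Module.Basis.ofVectorSpaceIndex ℚ ℝ
  set b : Module.Basis ι ℚ ℝ := Module.Basis.ofVectorSpace ℚ ℝ
  have hbcoe : ⇑b = ((↑) : ι → ℝ) := Module.Basis.coe_ofVectorSpace ℚ ℝ
  have hne : ∀ i : ι, (i : ℝ) ≠ 0 := by
    intro i
    have := b.ne_zero i
    rwa [hbcoe] at this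
  -- scaling units
  set w : ι → ℚˣ := fun i =>
    Units.mk0 ((if (0:ℝ) < (i:ℝ) then 1 else -1) / ((⌈|(i:ℝ)|⌉₊ : ℚ) + 1))
      (by
        apply div_ne_zero
        · split <;> norm_num
        · positivity) with hw
  set g : ι → ℝ := fun i => ((w i : ℚ) : ℝ) * (i : ℝ) with hg
  have hgval : ∀ i : ι, g i = |(i : ℝ)| / ((⌈|(i:ℝ)|⌉₊ : ℝ) + 1) := by
    intro i
    simp only [hg, hw, Units.val_mk0]
    push_cast
    rcases lt_trichotomy (0:ℝ) (i:ℝ) with h | h | h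
    · rw [if_pos h, abs_of_pos h]; ring
    · exact absurd h.symm (hne i)
    · rw [if_neg (by linarith), abs_of_neg h]; ring
  have hgmem : ∀ i : ι, g i ∈ Set.Icc (0:ℝ) 1 := by
    intro i
    rw [hgval i]
    have h1 : (0:ℝ) ≤ |(i:ℝ)| := abs_nonneg _
    have h2 : |(i:ℝ)| ≤ (⌈|(i:ℝ)|⌉₊ : ℝ) := Nat.le_ceil _
    have h3 : (0:ℝ) < (⌈|(i:ℝ)|⌉₊ : ℝ) + 1 := by positivity
    constructor
    · positivity
    · rw [div_le_one h3]; linarith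
  have hli : LinearIndependent ℚ g := by
    have h := b.linearIndependent.units_smul w
    set_option synthInstance.maxHeartbeats 1000000 in
    have he : (w • ⇑b) = g := by
      funext i
      simp [hg, hbcoe, Pi.smul_apply', Units.smul_def, Rat.smul_def]
    rwa [he] at h
  refine ⟨Set.range g, ?_, ?_, ?_⟩
  · rintro x ⟨i, rfl⟩; exact hgmem i
  · intro hc
    have hcount : Countable ι := by
      have : Countable ↥(Set.range g) := Set.countable_coe_iff.mpr hc
      exact (Equiv.ofInjective g hli.injective).countable_iff.mpr this
    have hspan : Countable (Submodule.span ℚ (Set.range ⇑b)) := by infer_instance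
    have htop : Submodule.span ℚ (Set.range ⇑b) = ⊤ := b.span_eq
    rw [htop] at hspan
    have : Countable ℝ := Countable.of_equiv _ (Submodule.topEquiv (R := ℚ) (M := ℝ)).toEquiv
    exact Cardinal.not_countable_real Set.countable_univ
  · rintro t ht x ⟨⟨i, hi⟩, y0, ⟨j, hj⟩, hy0⟩ y ⟨⟨k, hk⟩, z0, ⟨l, hl⟩, hz0⟩
    simp only at hy0 hz0
    have h1 : g i - g j = g k - g l := by rw [hi, hj, hk, hl]; linarith
    have hij : g i ≠ g j := by
      rw [hi, hj]; intro e; exact ht (by linarith)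
    obtain ⟨hik, -⟩ := sidon_of_li hli hij h1
    rw [← hi, ← hk, hik]
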